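/- For every ε > 0 and every integer j ≥ 1, there is a constant C(ε, j) such that for all Q ≥ 1, ∑_{q₁=1}^{Q} ... ∑_{q_j=1}^{Q} 1 / lcm(q₁, ..., q_j) ≤ C(ε, j) · Q^{ε}. -/

import Mathlib

lemma exp_quarter_sq_le (x : ℝ) (hx : 0 ≤ x) : x^2/4 ≤ Real.exp x := by
  have h := Real.add_one_le_exp (x/2)
  have h2 : Real.exp x = Real.exp (x/2) * Real.exp (x/2) := by
    rw [← Real.exp_add]; ring_nf
  nlinarith [Real.exp_pos (x/2)]

lemma key2 {δ : ℝ} (hδ : 0 < δ) (p k : ℕ) (hp : 2 ≤ p) (hk : 1 ≤ k) :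
    ((k + 1 : ℕ) : ℝ) ≤ (8 / (δ * Real.log 2)^2 + 2) * (p:ℝ) ^ ((k:ℝ) * δ) := by
  have hlog2 : 0 < Real.log 2 := Real.log_pos (by norm_num)
  have hkδ : 0 ≤ (k:ℝ) * δ := by positivity
  have h1 : (2:ℝ) ^ ((k:ℝ) * δ) ≤ (p:ℝ) ^ ((k:ℝ) * δ) :=
    Real.rpow_le_rpow (by norm_num) (by exact_mod_cast hp) hkδ
  have h2 : ((k:ℝ) * δ * Real.log 2)^2/4 ≤ (2:ℝ) ^ ((k:ℝ) * δ) := by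
    rw [Real.rpow_def_of_pos (by norm_num : (0:ℝ) < 2)]
    have := exp_quarter_sq_le (Real.log 2 * ((k:ℝ) * δ)) (by positivity)
    calc ((k:ℝ) * δ * Real.log 2)^2/4 = (Real.log 2 * ((k:ℝ)*δ))^2/4 := by ring
    _ ≤ _ := this
  have hk1 : (1:ℝ) ≤ (k:ℝ) := by exact_mod_cast hk
  have hB : (0:ℝ) < 8 / (δ * Real.log 2)^2 + 2 := by positivity
  push_cast
  have h3 := mul_le_mul_of_nonneg_left h1 hB.le
  have h4 : (8 / (δ * Real.log 2)^2 + 2) * ((k:ℝ) * δ * Real.log 2)^2/4 ≥ 2*(k:ℝ)^2 := by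
    have hpos : (0:ℝ) < (δ * Real.log 2)^2 := by positivity
    have e1 : (8 / (δ * Real.log 2)^2) * ((k:ℝ) * δ * Real.log 2)^2/4 = 2*(k:ℝ)^2 := by
      field_simp; ring
    nlinarith [sq_nonneg ((k:ℝ)*δ*Real.log 2)]
  nlinarith

lemma key1 {δ : ℝ} (hδ : 0 < δ) (p k : ℕ) (hp : ((2:ℝ) ^ (1/δ : ℝ)) ≤ p) :
    ((k + 1 : ℕ) : ℝ) ≤ (p:ℝ) ^ ((k:ℝ) * δ) := by
  have hpδ : (2:ℝ) ≤ (p:ℝ) ^ (δ:ℝ) := by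
    have := Real.rpow_le_rpow (by positivity) hp hδ.le
    rwa [← Real.rpow_mul (by norm_num), one_div_mul_cancel hδ.ne', Real.rpow_one] at this
  have h0 : (0:ℝ) ≤ (p:ℝ) := by positivity
  have h : (p:ℝ) ^ ((k:ℝ) * δ) = ((p:ℝ) ^ (δ:ℝ)) ^ k := by
    rw [mul_comm, Real.rpow_mul h0, Real.rpow_natCast]
  rw [h]
  calc ((k + 1 : ℕ) : ℝ) ≤ (2:ℝ)^k := by exact_mod_cast (Nat.lt_two_pow_self : k < 2 ^ k)
  _ ≤ ((p:ℝ) ^ (δ:ℝ))^k := pow_le_pow_left₀ (by norm_num) hpδ k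

lemma divisor_bound {δ : ℝ} (hδ : 0 < δ) :
    ∃ C : ℝ, 1 ≤ C ∧ ∀ n : ℕ, n ≠ 0 → (n.divisors.card : ℝ) ≤ C * (n : ℝ) ^ δ := by
  have hlog2 : 0 < Real.log 2 := Real.log_pos (by norm_num)
  set B : ℝ := 8 / (δ * Real.log 2)^2 + 2 with hBdef
  have hB1 : (1:ℝ) ≤ B := by
    have : (0:ℝ) ≤ 8 / (δ * Real.log 2)^2 := by positivity
    rw [hBdef]; linarith
  set M : ℕ := ⌈(2:ℝ) ^ (1/δ : ℝ)⌉₊ with hMdef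
  refine ⟨B ^ M, one_le_pow₀ hB1, ?_⟩
  intro n hn
  have hd : (n.divisors.card : ℝ) = ∏ p ∈ n.primeFactors, ((n.factorization p + 1 : ℕ) : ℝ) := by
    rw [Nat.card_divisors hn]; push_cast; rfl
  have hnr : (n:ℝ) ^ δ = ∏ p ∈ n.primeFactors, (p:ℝ) ^ ((n.factorization p : ℝ) * δ) := by
    have h1 : (n:ℝ) = ∏ p ∈ n.primeFactors, (p:ℝ) ^ (n.factorization p) := by
      conv_lhs => rw [← Nat.factorization_prod_pow_eq_self hn]
      rw [Finsupp.prod, Nat.support_factorization]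
      push_cast; rfl
    rw [h1, ← Real.finset_prod_rpow _ _ (fun p _ => by positivity) δ]
    refine Finset.prod_congr rfl fun p hp => ?_
    rw [← Real.rpow_natCast (p:ℝ) (n.factorization p), ← Real.rpow_mul (by positivity)]
  set S := n.primeFactors with hS
  set f : ℕ → ℝ := fun p => (p:ℝ) ^ ((n.factorization p : ℝ) * δ) with hf
  have hfpos : ∀ p ∈ S, (0:ℝ) < f p := by
    intro p hp
    have hp2 : 2 ≤ p := (Nat.prime_of_mem_primeFactors hp).two_le
    have : (0:ℝ) < p := by exact_mod_cast Nat.lt_of_lt_of_le (by norm_num) hp2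
    exact Real.rpow_pos_of_pos this _
  rw [hd, hnr]
  rw [← Finset.prod_filter_mul_prod_filter_not S (fun p => p ≤ M)]
  have hb2 : ∏ p ∈ S.filter (fun p => ¬ p ≤ M), ((n.factorization p + 1 : ℕ) : ℝ)
      ≤ ∏ p ∈ S.filter (fun p => ¬ p ≤ M), f p := by
    refine Finset.prod_le_prod (fun p _ => by positivity) (fun p hp => ?_)
    rw [Finset.mem_filter] at hp
    refine key1 hδ p _ ?_
    have : (M:ℝ) ≤ p := by exact_mod_cast Nat.le_of_not_le hp.2
    exact le_trans (Nat.le_ceil _) this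
  have hb1 : ∏ p ∈ S.filter (fun p => p ≤ M), ((n.factorization p + 1 : ℕ) : ℝ)
      ≤ B ^ M * ∏ p ∈ S.filter (fun p => p ≤ M), f p := by
    calc ∏ p ∈ S.filter (fun p => p ≤ M), ((n.factorization p + 1 : ℕ) : ℝ)
        ≤ ∏ p ∈ S.filter (fun p => p ≤ M), (B * f p) := by
          refine Finset.prod_le_prod (fun p _ => by positivity) (fun p hp => ?_)
          rw [Finset.mem_filter] at hp
          exact key2 hδ p _ (Nat.prime_of_mem_primeFactors hp.1).two_le
            ((Nat.Prime.factorization_pos_of_dvd (Nat.prime_of_mem_primeFactors hp.1) hn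
              (Nat.dvd_of_mem_primeFactors hp.1)))
    _ = B ^ (S.filter (fun p => p ≤ M)).card * ∏ p ∈ S.filter (fun p => p ≤ M), f p := by
          rw [Finset.prod_mul_distrib, Finset.prod_const]
    _ ≤ B ^ M * ∏ p ∈ S.filter (fun p => p ≤ M), f p := by
          refine mul_le_mul_of_nonneg_right (pow_le_pow_right₀ hB1 ?_) ?_
          · calc (S.filter (fun p => p ≤ M)).card ≤ (Finset.Icc 1 M).card := by
                  refine Finset.card_le_card (fun p hp => ?_)
                  rw [Finset.mem_filter] at hp
                  exact Finset.mem_Icc.mpr ⟨(Nat.prime_of_mem_primeFactors hp.1).one_lt.le, hp.2⟩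
            _ = M := by rw [Nat.card_Icc]; omega
          · exact Finset.prod_nonneg (fun p hp => (hfpos p (Finset.mem_filter.mp hp).1).le)
  calc (∏ p ∈ S.filter (fun p => p ≤ M), ((n.factorization p + 1 : ℕ) : ℝ)) *
        ∏ p ∈ S.filter (fun p => ¬ p ≤ M), ((n.factorization p + 1 : ℕ) : ℝ)
      ≤ (B ^ M * ∏ p ∈ S.filter (fun p => p ≤ M), f p) * ∏ p ∈ S.filter (fun p => ¬ p ≤ M), f p := by
        refine mul_le_mul hb1 hb2 (Finset.prod_nonneg fun p _ => by positivity) ?_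
        positivity
  _ = B ^ M * ∏ p ∈ S, f p := by
        rw [mul_assoc, Finset.prod_filter_mul_prod_filter_not]

theorem stmt_7 (ε : ℝ) (hε : 0 < ε) (j : ℕ) (hj : 1 ≤ j) :
    ∃ C : ℝ, 0 < C ∧ ∀ Q : ℕ, 1 ≤ Q →
      (∑ q ∈ Fintype.piFinset (fun _ : Fin j => Finset.Icc 1 Q),
          (1 : ℝ) / (Finset.univ.lcm q : ℕ)) ≤ C * (Q : ℝ) ^ ε := by
  classical
  have hjR : (0:ℝ) < (j:ℝ) := by exact_mod_cast hj
  set δ : ℝ := ε / (2 * (j:ℝ)^2) with hδdef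
  have hδ : 0 < δ := by positivity
  obtain ⟨A, hA1, hA⟩ := divisor_bound hδ
  set β : ℝ := (j:ℝ) * δ with hβdef
  have hβ : 0 < β := by positivity
  have hA0 : (0:ℝ) < A := lt_of_lt_of_le one_pos hA1
  refine ⟨A ^ j * (1 + 1/β), by positivity, ?_⟩
  intro Q hQ
  set N : ℕ := Q ^ j with hNdef
  have hN1 : 1 ≤ N := Nat.one_le_pow _ _ hQ
  have hNR : (1:ℝ) ≤ (N:ℝ) := by exact_mod_cast hN1
  set P := Fintype.piFinset (fun _ : Fin j => Finset.Icc 1 Q) with hP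
  have hmaps : ∀ q ∈ P, Finset.univ.lcm q ∈ Finset.Icc 1 N := by
    intro q hq
    have hqi : ∀ i, q i ∈ Finset.Icc 1 Q := Fintype.mem_piFinset.mp hq
    have hdvd : Finset.univ.lcm q ∣ ∏ i, q i :=
      Finset.lcm_dvd (fun i _ => Finset.dvd_prod_of_mem q (Finset.mem_univ i))
    have hprodpos : 0 < ∏ i, q i :=
      Finset.prod_pos (fun i _ => (Finset.mem_Icc.mp (hqi i)).1)
    have hprodle : ∏ i, q i ≤ N := by
      rw [hNdef]
      calc ∏ i, q i ≤ Q ^ (Finset.univ : Finset (Fin j)).card :=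
            Finset.prod_le_pow_card _ _ _ (fun i _ => (Finset.mem_Icc.mp (hqi i)).2)
      _ = Q ^ j := by rw [Finset.card_univ, Fintype.card_fin]
    have hlcmpos : 0 < Finset.univ.lcm q := by
      rcases Nat.eq_zero_or_pos (Finset.univ.lcm q) with h | h
      · exfalso
        rw [h] at hdvd
        have := Nat.eq_zero_of_zero_dvd hdvd
        omega
      · exact h
    exact Finset.mem_Icc.mpr ⟨hlcmpos, le_trans (Nat.le_of_dvd hprodpos hdvd) hprodle⟩
  rw [← Finset.sum_fiberwise_of_maps_to hmaps (fun q => (1:ℝ)/((Finset.univ.lcm q : ℕ) : ℝ))]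
  have hstep : ∀ r ∈ Finset.Icc 1 N,
      (∑ q ∈ P.filter (fun q => Finset.univ.lcm q = r), (1:ℝ)/((Finset.univ.lcm q : ℕ) : ℝ))
        ≤ A ^ j * (N:ℝ) ^ β * (1/(r:ℝ)) := by
    intro r hr
    obtain ⟨hr1, hrN⟩ := Finset.mem_Icc.mp hr
    have hrpos : (0:ℝ) < (r:ℝ) := by exact_mod_cast hr1
    have heq : (∑ q ∈ P.filter (fun q => Finset.univ.lcm q = r), (1:ℝ)/((Finset.univ.lcm q : ℕ) : ℝ))
        = ((P.filter (fun q => Finset.univ.lcm q = r)).card : ℝ) * (1/(r:ℝ)) := by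
      rw [Finset.sum_congr rfl (fun q hq => by rw [(Finset.mem_filter.mp hq).2]),
        Finset.sum_const, nsmul_eq_mul]
    rw [heq]
    refine mul_le_mul_of_nonneg_right ?_ (by positivity)
    have hcard : (P.filter (fun q => Finset.univ.lcm q = r)).card ≤ r.divisors.card ^ j := by
      calc (P.filter (fun q => Finset.univ.lcm q = r)).card
          ≤ (Fintype.piFinset (fun _ : Fin j => r.divisors)).card := by
            refine Finset.card_le_card (fun q hq => ?_)
            obtain ⟨hq1, hq2⟩ := Finset.mem_filter.mp hq
            refine Fintype.mem_piFinset.mpr (fun i => Nat.mem_divisors.mpr ⟨?_, by omega⟩)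
            rw [← hq2]
            exact Finset.dvd_lcm (Finset.mem_univ i)
      _ = r.divisors.card ^ j := by
            rw [Fintype.card_piFinset]
            simp
    have hdb : (r.divisors.card : ℝ) ≤ A * (r:ℝ) ^ δ := hA r (by omega)
    have h2 : (A * (r:ℝ)^δ)^j = A^j * (r:ℝ)^β := by
      rw [mul_pow, hβdef, ← Real.rpow_natCast ((r:ℝ)^δ) j, ← Real.rpow_mul hrpos.le,
        mul_comm δ]
    have h3 : (r:ℝ)^β ≤ (N:ℝ)^β :=
      Real.rpow_le_rpow hrpos.le (by exact_mod_cast hrN) hβ.le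
    calc ((P.filter (fun q => Finset.univ.lcm q = r)).card : ℝ)
        ≤ ((r.divisors.card : ℝ))^j := by exact_mod_cast hcard
    _ ≤ (A * (r:ℝ)^δ)^j := pow_le_pow_left₀ (by positivity) hdb j
    _ = A^j * (r:ℝ)^β := h2
    _ ≤ A^j * (N:ℝ)^β := by
        exact mul_le_mul_of_nonneg_left h3 (by positivity)
  have hH : ∑ r ∈ Finset.Icc 1 N, (1:ℝ)/(r:ℝ) ≤ 1 + Real.log N := by
    have h1 : ((harmonic N : ℚ) : ℝ) = ∑ r ∈ Finset.Icc 1 N, (1:ℝ)/(r:ℝ) := by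
      rw [harmonic_eq_sum_Icc]
      push_cast
      simp [one_div]
    rw [← h1]
    exact harmonic_le_one_add_log N
  have hNβ1 : (1:ℝ) ≤ (N:ℝ)^β := Real.one_le_rpow hNR hβ.le
  have hlogN : 1 + Real.log N ≤ (1 + 1/β) * (N:ℝ)^β := by
    have := Real.log_le_rpow_div (by positivity : (0:ℝ) ≤ (N:ℝ)) hβ
    have hb : (N:ℝ)^β/β = (1/β) * (N:ℝ)^β := by ring
    nlinarith
  have hNββ : (N:ℝ)^β * (N:ℝ)^β = (Q:ℝ)^ε := by
    rw [← Real.rpow_add (by linarith : (0:ℝ) < (N:ℝ))]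
    have hcast : (N:ℝ) = (Q:ℝ)^(j:ℕ) := by rw [hNdef]; push_cast; rfl
    rw [hcast, ← Real.rpow_natCast (Q:ℝ) j, ← Real.rpow_mul (by positivity)]
    congr 1
    rw [hβdef, hδdef]
    field_simp
    ring
  calc ∑ r ∈ Finset.Icc 1 N, ∑ q ∈ P.filter (fun q => Finset.univ.lcm q = r),
          (1:ℝ)/((Finset.univ.lcm q : ℕ) : ℝ)
      ≤ ∑ r ∈ Finset.Icc 1 N, A ^ j * (N:ℝ) ^ β * (1/(r:ℝ)) := Finset.sum_le_sum hstep
  _ = A ^ j * (N:ℝ) ^ β * ∑ r ∈ Finset.Icc 1 N, (1:ℝ)/(r:ℝ) := by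
      rw [Finset.mul_sum]
  _ ≤ A ^ j * (N:ℝ) ^ β * (1 + Real.log N) := by
      refine mul_le_mul_of_nonneg_left hH (by positivity)
  _ ≤ A ^ j * (N:ℝ) ^ β * ((1 + 1/β) * (N:ℝ)^β) := by
      refine mul_le_mul_of_nonneg_left hlogN (by positivity)
  _ = A ^ j * (1 + 1/β) * ((N:ℝ)^β * (N:ℝ)^β) := by ring
  _ = A ^ j * (1 + 1/β) * (Q:ℝ)^ε := by rw [hNββ]
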